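/- Let h, w ≥ 1 be natural numbers and let f : Fin h × Fin w → Bool assign to each cell of an h×w grid the label closed (true) or open (false). Call two distinct cells 8-adjacent if their row indices differ by at most 1 and their column indices differ by at most 1, and 4-adjacent if the sum of the absolute differences of their row and column indices equals 1. If there is no finite sequence of closed cells, with consecutive cells 8-adjacent, whose first cell lies in column 0 and whose last cell lies in column w−1, then there exists a finite sequence of open cells, with consecutive cells 4-adjacent, whose first cell lies in row 0 and whose last cell lies in row h−1. -/

import Mathlib

/-- Two distinct cells of an `h × w` grid are 8-adjacent if their row indices differ by
at most `1` and their column indices differ by at most `1`. -/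
def Adj8 {h w : ℕ} (a b : Fin h × Fin w) : Prop :=
  a ≠ b ∧ |(a.1 : ℤ) - (b.1 : ℤ)| ≤ 1 ∧ |(a.2 : ℤ) - (b.2 : ℤ)| ≤ 1

/-- Two cells of an `h × w` grid are 4-adjacent if the sum of the absolute differences
of their row and column indices equals `1`. -/
def Adj4 {h w : ℕ} (a b : Fin h × Fin w) : Prop :=
  |(a.1 : ℤ) - (b.1 : ℤ)| + |(a.2 : ℤ) - (b.2 : ℤ)| = 1


namespace PercDual

inductive Dir | E | S | W | N
deriving DecidableEq

open Dir

instance : Fintype Dir := ⟨{E, S, W, N}, fun x => by cases x <;> simp⟩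

def vec : Dir → ℤ × ℤ
  | E => (1,0) | S => (0,1) | W => (-1,0) | N => (0,-1)

def tl : Dir → Dir | E => N | N => W | W => S | S => E
def tr : Dir → Dir | E => S | S => W | W => N | N => E

def Rcell (p : ℤ × ℤ) : Dir → ℤ × ℤ
  | E => (p.2, p.1) | S => (p.2, p.1 - 1) | W => (p.2 - 1, p.1 - 1) | N => (p.2 - 1, p.1)

def Lcell (p : ℤ × ℤ) : Dir → ℤ × ℤ
  | E => (p.2 - 1, p.1) | S => (p.2, p.1) | W => (p.2, p.1 - 1) | N => (p.2 - 1, p.1 - 1)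

variable (cl : ℤ × ℤ → Bool)

abbrev St := (ℤ × ℤ) × Dir

def pos (s : St) : ℤ × ℤ := s.1 + vec s.2

def ndp (p : ℤ × ℤ) (d : Dir) : Dir :=
  if cl (Lcell p d) then tl d else if cl (Rcell p d) then d else tr d

def step (s : St) : St := (pos s, ndp cl (pos s) s.2)

def RB (s : St) : ℤ × ℤ := Rcell s.1 s.2
def LB (s : St) : ℤ × ℤ := Lcell s.1 s.2

def Inv (s : St) : Prop := cl (RB s) = true ∧ cl (LB s) = false

def midO (s : St) : ℤ × ℤ :=
  if cl (Lcell (pos s) s.2) ∨ cl (Rcell (pos s) s.2) then LB s else Lcell (pos s) s.2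

def adj8 (a b : ℤ × ℤ) : Prop := |a.1 - b.1| ≤ 1 ∧ |a.2 - b.2| ≤ 1
def adj4 (a b : ℤ × ℤ) : Prop := |a.1 - b.1| + |a.2 - b.2| ≤ 1

theorem inv_step {s : St} (hs : Inv cl s) : Inv cl (step cl s) := by
  obtain ⟨⟨x, y⟩, d⟩ := s
  obtain ⟨h1, h2⟩ := hs
  cases d <;>
    simp only [Inv, RB, LB, step, pos, ndp, vec, Rcell, Lcell, tl, tr, Prod.mk_add_mk,
      add_zero, zero_add, ← sub_eq_add_neg, add_sub_cancel_right, sub_add_cancel_right,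
      Prod.fst, Prod.snd] at * <;>
    split_ifs with hL hR <;> simp_all

theorem RB_adj {s : St} : adj8 (RB s) (RB (step cl s)) := by
  obtain ⟨⟨x, y⟩, d⟩ := s
  cases d <;>
    simp only [adj8, RB, step, pos, ndp, vec, Rcell, Lcell, tl, tr, Prod.mk_add_mk,
      add_zero, zero_add, ← sub_eq_add_neg, add_sub_cancel_right, sub_add_cancel_right,
      Prod.fst, Prod.snd] <;>
    split_ifs <;> dsimp only <;> constructor <;> (rw [abs_le]; omega)

theorem mid_open {s : St} (hs : Inv cl s) : cl (midO cl s) = false := by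
  obtain ⟨⟨x, y⟩, d⟩ := s
  obtain ⟨h1, h2⟩ := hs
  cases d <;>
    simp only [midO, Inv, RB, LB, step, pos, ndp, vec, Rcell, Lcell, tl, tr, Prod.mk_add_mk,
      add_zero, zero_add, ← sub_eq_add_neg, add_sub_cancel_right, sub_add_cancel_right,
      Prod.fst, Prod.snd] at * <;>
    split_ifs <;> simp_all

theorem abs_add_le_one (u v : ℤ) :
    |u| + |v| ≤ 1 ↔ (u + v ≤ 1 ∧ u - v ≤ 1 ∧ v - u ≤ 1 ∧ -u - v ≤ 1) := by
  rcases abs_cases u with ⟨h1, _⟩ | ⟨h1, _⟩ <;> rcases abs_cases v with ⟨h2, _⟩ | ⟨h2, _⟩ <;>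
    omega

theorem LB_mid_adj {s : St} : adj4 (LB s) (midO cl s) := by
  obtain ⟨⟨x, y⟩, d⟩ := s
  cases d <;>
    simp only [adj4, midO, LB, step, pos, ndp, vec, Rcell, Lcell, tl, tr, Prod.mk_add_mk,
      add_zero, zero_add, ← sub_eq_add_neg, add_sub_cancel_right, sub_add_cancel_right,
      Prod.fst, Prod.snd] <;>
    split_ifs <;> dsimp only [tl, tr, Rcell, Lcell, vec, Prod.mk_add_mk] <;>
    (try (exfalso; tauto)) <;>
    (rw [abs_add_le_one]; refine ⟨by omega, by omega, by omega, by omega⟩)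

theorem mid_LB_adj {s : St} : adj4 (midO cl s) (LB (step cl s)) := by
  obtain ⟨⟨x, y⟩, d⟩ := s
  cases d <;>
    simp only [adj4, midO, LB, step, pos, ndp, vec, Rcell, Lcell, tl, tr, Prod.mk_add_mk,
      add_zero, zero_add, ← sub_eq_add_neg, add_sub_cancel_right, sub_add_cancel_right,
      Prod.fst, Prod.snd] <;>
    split_ifs <;> dsimp only [tl, tr, Rcell, Lcell, vec, Prod.mk_add_mk] <;>
    (try (exfalso; tauto)) <;>
    (rw [abs_add_le_one]; refine ⟨by omega, by omega, by omega, by omega⟩)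



theorem step_inj {s t : St} (hs : Inv cl s) (ht : Inv cl t) (hst : step cl s = step cl t) :
    s = t := by
  obtain ⟨ps, ds⟩ := s
  obtain ⟨pt, dt⟩ := t
  have h1 : ps + vec ds = pt + vec dt := congrArg Prod.fst hst
  have h2 : ndp cl (ps + vec ds) ds = ndp cl (ps + vec ds) dt := by
    have h2' := congrArg Prod.snd hst
    simp only [step, pos] at h2'
    rwa [← h1] at h2'
  have hpt : pt = ps + vec ds - vec dt := by rw [h1]; simp
  subst hpt
  clear hst h1
  obtain ⟨x, y⟩ := ps
  simp only [Inv, RB, LB] at hs ht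
  obtain ⟨h3, h4⟩ := hs
  obtain ⟨h5, h6⟩ := ht
  cases ds <;> cases dt <;>
    simp only [vec, Rcell, Lcell, ndp, tl, tr, Prod.mk_add_mk, Prod.mk_sub_mk,
      add_zero, zero_add, sub_zero, ← sub_eq_add_neg, sub_neg_eq_add,
      add_sub_cancel_right, sub_add_cancel_right, Prod.mk.injEq] at h2 h3 h4 h5 h6 ⊢ <;>
    (try split_ifs at h2) <;> simp_all <;> constructorm* _ ∧ _ <;> first | trivial | omega

def s0 : St := ((-1, 0), Dir.E)

def walk (n : ℕ) : St := (step cl)^[n] s0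

theorem walk_succ (n : ℕ) : walk cl (n + 1) = step cl (walk cl n) :=
  Function.iterate_succ_apply' _ _ _

section Grid

variable {hI wI : ℤ}
variable (hcl0 : cl (0, -1) = true) (hcl1 : cl (-1, -1) = false)
variable (hrow : ∀ c : ℤ × ℤ, cl c = true → 0 ≤ c.1 ∧ c.1 < hI)
variable (hwall : ∀ c : ℤ × ℤ, 0 ≤ c.1 → c.1 < hI → (c.2 < 0 ∨ wI ≤ c.2) → cl c = true)

include hcl0 hcl1 in
theorem inv_walk : ∀ n, Inv cl (walk cl n) := by
  intro n
  induction n with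
  | zero => exact ⟨hcl0, hcl1⟩
  | succ n ih => rw [walk_succ]; exact inv_step cl ih

include hcl0 hcl1 hrow hwall in
theorem pos_bounds (hh : 1 ≤ hI) (hw : 1 ≤ wI) (N : ℕ)
    (Hout : ∀ m, m ≤ N → (LB (walk cl m)).1 < hI ∧ (RB (walk cl m)).2 < wI) :
    ∀ n, n ≤ N → 0 ≤ (pos (walk cl n)).1 ∧ (pos (walk cl n)).1 ≤ wI ∧
      0 ≤ (pos (walk cl n)).2 ∧ (pos (walk cl n)).2 ≤ hI := by
  intro n
  induction n with
  | zero =>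
    intro _
    simp only [walk, Function.iterate_zero, id, s0, pos, vec, Prod.mk_add_mk]
    norm_num
    omega
  | succ n ih =>
    intro hn
    have ih' := ih (by omega)
    have hinv' : Inv cl (walk cl (n + 1)) := inv_walk cl hcl0 hcl1 _
    have hout' := Hout (n + 1) hn
    -- the new state's base point is the old position
    have hq : (walk cl (n + 1)).1 = pos (walk cl n) := by rw [walk_succ]; rfl
    rcases hW : walk cl (n + 1) with ⟨⟨a, b⟩, d'⟩
    rw [hW] at hq hinv' hout'
    rw [← hq] at ih'
    dsimp only at ih'
    simp only [Inv, RB, LB] at hinv' hout'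
    obtain ⟨hc1, hc2⟩ := hinv'
    cases d' <;>
      simp only [pos, vec, Rcell, Lcell, Prod.mk_add_mk, add_zero, zero_add,
        ← sub_eq_add_neg] at hc1 hc2 hout' ⊢
    · -- E
      have := hrow _ hc1
      simp at this ⊢
      omega
    · -- S
      have := hrow _ hc1
      simp at this ⊢
      omega
    · -- W : the delicate case
      have h1 := hrow _ hc1
      simp at h1 ih' ⊢
      constructor
      · -- 0 ≤ a - 1
        by_contra hcon
        push_neg at hcon
        have hb : ¬ (0 ≤ (b : ℤ) ∧ b < hI) := by
          intro ⟨u1, u2⟩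
          have := hwall (b, a - 1) u1 u2 (by left; omega)
          rw [this] at hc2; exact Bool.true_eq_false.mp hc2
        push_neg at hb
        have : hI ≤ b := by
          rcases lt_or_ge b 0 with hb0 | hb0
          · omega
          · exact hb hb0
        omega
      · omega
    · -- N
      have := hrow _ hc1
      simp at this ⊢
      omega

include hcl0 hcl1 in
theorem walk_shift : ∀ m n, m ≤ n → walk cl m = walk cl n → walk cl 0 = walk cl (n - m) := by
  intro m
  induction m with
  | zero => intro n _ hmn; simpa using hmn
  | succ m ih =>
    intro n hmn heq
    have hn1 : n = (n - 1) + 1 := by omega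
    rw [hn1, walk_succ, walk_succ] at heq
    have h2 := step_inj cl (inv_walk cl hcl0 hcl1 m) (inv_walk cl hcl0 hcl1 (n - 1)) heq
    have h3 := ih (n - 1) (by omega) h2
    rw [show n - (m + 1) = (n - 1) - m from by omega]
    exact h3

include hcl0 hcl1 hrow hwall in
theorem exists_outcome (hh : 1 ≤ hI) (hw : 1 ≤ wI) :
    ∃ n, hI ≤ (LB (walk cl n)).1 ∨ wI ≤ (RB (walk cl n)).2 := by
  by_contra hcon
  push_neg at hcon
  have hb : ∀ n : ℕ, 0 ≤ (pos (walk cl n)).1 ∧ (pos (walk cl n)).1 ≤ wI ∧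
      0 ≤ (pos (walk cl n)).2 ∧ (pos (walk cl n)).2 ≤ hI := fun n =>
    pos_bounds cl hcl0 hcl1 hrow hwall hh hw n (fun m _ => hcon m) n le_rfl
  classical
  set B : Finset ((ℤ × ℤ) × Dir) :=
    (Finset.Icc (0 : ℤ) wI ×ˢ Finset.Icc (0 : ℤ) hI) ×ˢ Finset.univ with hB
  have hmem : ∀ n : ℕ, 1 ≤ n → walk cl n ∈ B := by
    intro n h1
    obtain ⟨k, rfl⟩ : ∃ k, n = k + 1 := ⟨n - 1, by omega⟩
    have hq : (walk cl (k + 1)).1 = pos (walk cl k) := by rw [walk_succ]; rfl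
    have hbn := hb k
    rw [← hq] at hbn
    simp only [hB, Finset.mem_product, Finset.mem_Icc, Finset.mem_univ, and_true]
    exact ⟨⟨hbn.1, hbn.2.1⟩, hbn.2.2⟩
  obtain ⟨m, hm, n, hn, hne, heq⟩ :=
    Finset.exists_ne_map_eq_of_card_lt_of_maps_to
      (s := Finset.Icc 1 (B.card + 1)) (t := B)
      (by rw [Nat.card_Icc]; omega)
      (fun a ha => hmem a (Finset.mem_Icc.mp ha).1)
  rw [Finset.mem_Icc] at hm hn
  -- wlog m < n
  rcases lt_or_gt_of_ne hne with hlt | hlt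
  case _ =>
    have h0 := walk_shift cl hcl0 hcl1 m n (le_of_lt hlt) heq
    have hj : 1 ≤ n - m := by omega
    have : pos (walk cl (n - m - 1)) = (-1, 0) := by
      have : walk cl (n - m) = s0 := h0.symm
      rw [show n - m = (n - m - 1) + 1 from by omega, walk_succ] at this
      exact congrArg Prod.fst this
    have hbb := hb (n - m - 1)
    rw [this] at hbb
    norm_num at hbb
  case _ =>
    have h0 := walk_shift cl hcl0 hcl1 n m (le_of_lt hlt) heq.symm
    have hj : 1 ≤ m - n := by omega
    have : pos (walk cl (m - n - 1)) = (-1, 0) := by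
      have : walk cl (m - n) = s0 := h0.symm
      rw [show m - n = (m - n - 1) + 1 from by omega, walk_succ] at this
      exact congrArg Prod.fst this
    have hbb := hb (m - n - 1)
    rw [this] at hbb
    norm_num at hbb

end Grid

def cseq (n : ℕ) : ℤ × ℤ := RB (walk cl n)

def oseq (m : ℕ) : ℤ × ℤ :=
  if m % 2 = 0 then LB (walk cl (m / 2)) else midO cl (walk cl (m / 2))

section ChainLemmas

variable (hcl0 : cl (0, -1) = true) (hcl1 : cl (-1, -1) = false)

include hcl0 hcl1 in
theorem cseq_closed (n : ℕ) : cl (cseq cl n) = true := (inv_walk cl hcl0 hcl1 n).1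

theorem cseq_adj (n : ℕ) : adj8 (cseq cl n) (cseq cl (n + 1)) := by
  unfold cseq
  rw [walk_succ]
  exact RB_adj cl

theorem cseq_zero : cseq cl 0 = (0, -1) := rfl

include hcl0 hcl1 in
theorem oseq_open (m : ℕ) : cl (oseq cl m) = false := by
  unfold oseq
  split_ifs
  · exact (inv_walk cl hcl0 hcl1 _).2
  · exact mid_open cl (inv_walk cl hcl0 hcl1 _)

theorem oseq_adj (m : ℕ) : adj4 (oseq cl m) (oseq cl (m + 1)) := by
  unfold oseq
  rcases Nat.even_or_odd m with he | ho
  · have h1 : m % 2 = 0 := Nat.even_iff.mp he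
    have h2 : (m + 1) % 2 = 1 := by omega
    have h3 : (m + 1) / 2 = m / 2 := by omega
    rw [if_pos h1, if_neg (by omega : ¬(m + 1) % 2 = 0), h3]
    exact LB_mid_adj cl
  · have h1 : m % 2 = 1 := Nat.odd_iff.mp ho
    have h3 : (m + 1) / 2 = m / 2 + 1 := by omega
    rw [if_neg (by omega : ¬m % 2 = 0), if_pos (by omega : (m + 1) % 2 = 0), h3,
      walk_succ]
    exact mid_LB_adj cl

theorem oseq_zero : oseq cl 0 = (-1, -1) := by
  show LB s0 = (-1, -1)
  simp [LB, s0, Lcell]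

theorem oseq_even (n : ℕ) : oseq cl (2 * n) = LB (walk cl n) := by
  unfold oseq
  rw [if_pos (by omega), Nat.mul_div_cancel_left _ (by norm_num)]

end ChainLemmas

theorem cross (M : ℤ) (hM : 1 ≤ M) (v : ℕ → ℤ) (T : ℕ) (h0 : v 0 < 0) (hT : M ≤ v T)
    (hstep : ∀ i, |v (i + 1) - v i| ≤ 1) :
    ∃ a b : ℕ, a ≤ b ∧ v a = 0 ∧ v b = M - 1 ∧
      ∀ i, a ≤ i → i ≤ b → 0 ≤ v i ∧ v i < M := by
  classical
  have hex : ∃ n, M ≤ v n := ⟨T, hT⟩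
  set Bi := Nat.find hex with hBi
  have hBispec : M ≤ v Bi := Nat.find_spec hex
  have hBmin : ∀ i, i < Bi → v i < M := by
    intro i hi
    have := Nat.find_min hex hi
    omega
  have hB1 : 1 ≤ Bi := by
    rcases Nat.eq_zero_or_pos Bi with hz | hp
    · rw [hz] at hBispec; omega
    · omega
  have hvb : v (Bi - 1) = M - 1 := by
    have h1 := hstep (Bi - 1)
    have h2 : Bi - 1 + 1 = Bi := by omega
    have h3 := hBmin (Bi - 1) (by omega)
    rw [h2] at h1
    rcases abs_le.mp h1 with ⟨l, r⟩
    omega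
  set b := Bi - 1 with hbdef
  set a' := Nat.findGreatest (fun j => v j < 0) b with ha'
  have ha'le : a' ≤ b := Nat.findGreatest_le b
  have ha'spec : v a' < 0 := Nat.findGreatest_spec (P := fun j => v j < 0) (Nat.zero_le b) h0
  have hgt : ∀ j, a' < j → j ≤ b → ¬ v j < 0 := fun j h1 h2 =>
    Nat.findGreatest_is_greatest h1 h2
  have ha'b : a' < b := by
    rcases lt_or_eq_of_le ha'le with hlt | heqq
    · exact hlt
    · rw [heqq] at ha'spec; omega
  refine ⟨a' + 1, b, by omega, ?_, hvb, ?_⟩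
  · have h1 := hstep a'
    have h2 := hgt (a' + 1) (by omega) (by omega)
    rcases abs_le.mp h1 with ⟨l, r⟩
    omega
  · intro i h1 h2
    refine ⟨by have := hgt i (by omega) h2; omega, hBmin i (by omega)⟩

section Lists

variable {α : Type*} [DecidableEq α]

def dd : List α → List α
  | [] => []
  | [a] => [a]
  | a :: b :: t => if a = b then dd (b :: t) else a :: dd (b :: t)

theorem dd_ne_nil : ∀ {l : List α}, l ≠ [] → dd l ≠ []
  | [], hl => absurd rfl hl
  | [a], _ => by simp [dd]
  | a :: b :: t, _ => by
    rw [dd]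
    split_ifs
    · exact dd_ne_nil (by simp)
    · simp

theorem dd_head? : ∀ l : List α, (dd l).head? = l.head?
  | [] => rfl
  | [a] => rfl
  | a :: b :: t => by
    rw [dd]
    split_ifs with hab
    · rw [dd_head? (b :: t)]; simp [hab]
    · simp

theorem dd_getLast? : ∀ l : List α, (dd l).getLast? = l.getLast?
  | [] => rfl
  | [a] => rfl
  | a :: b :: t => by
    rw [dd]
    split_ifs with hab
    · rw [dd_getLast? (b :: t)]
      simp [List.getLast?_cons_cons]
    · have hne := dd_ne_nil (l := b :: t) (by simp)
      rcases hdd : dd (b :: t) with _ | ⟨c, u⟩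
      · exact absurd hdd hne
      · rw [List.getLast?_cons_cons, ← hdd, dd_getLast? (b :: t)]
        simp [List.getLast?_cons_cons]

theorem dd_subset : ∀ l : List α, ∀ x ∈ dd l, x ∈ l
  | [] => by simp [dd]
  | [a] => by simp [dd]
  | a :: b :: t => by
    rw [dd]
    split_ifs
    · intro x hx
      have := dd_subset (b :: t) x hx
      simp at this ⊢
      tauto
    · intro x hx
      rcases hx with _ | hx
      · simp
      · have := dd_subset (b :: t) x (by assumption)
        simp at this ⊢
        tauto

theorem dd_chain' {R : α → α → Prop} :
    ∀ {l : List α}, l.Chain' R → (dd l).Chain' fun x y => R x y ∧ x ≠ y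
  | [], _ => by simp [dd, List.Chain']
  | [a], _ => by simp [dd, List.Chain']
  | a :: b :: t, hc => by
    rw [dd]
    obtain ⟨hab, htail⟩ := List.isChain_cons_cons.mp hc
    split_ifs with heq
    · subst heq
      exact dd_chain' htail
    · unfold List.Chain'; rw [List.isChain_cons]
      refine ⟨?_, dd_chain' htail⟩
      intro y hy
      rw [dd_head? (b :: t)] at hy
      simp at hy
      subst hy
      exact ⟨hab, heq⟩

theorem chain_path (R : α → α → Prop) (u : ℕ → α) (a b : ℕ) (hab : a ≤ b)
    (hR : ∀ i, a ≤ i → i < b → R (u i) (u (i + 1))) :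
    ∃ (k : ℕ) (q : Fin (k + 1) → α),
      (∀ i, ∃ j, a ≤ j ∧ j ≤ b ∧ q i = u j) ∧
      (∀ i : Fin k, R (q i.castSucc) (q i.succ) ∧ q i.castSucc ≠ q i.succ) ∧
      q 0 = u a ∧ q (Fin.last k) = u b := by
  classical
  obtain ⟨l', hne, hch, hhd, hlast, hsub⟩ :
      ∃ l' : List α, l' ≠ [] ∧ l'.Chain' (fun x y => R x y ∧ x ≠ y) ∧
        l'.head? = some (u a) ∧ l'.getLast? = some (u b) ∧
        ∀ x ∈ l', ∃ j, a ≤ j ∧ j ≤ b ∧ x = u j := by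
    set l : List α := (List.range (b + 1 - a)).map (fun i => u (a + i)) with hl
    have hlne : l ≠ [] := by
      simp [hl, List.range_eq_nil]
      omega
    have hchain : l.Chain' R := by
      rw [hl]; unfold List.Chain'; rw [List.isChain_map]
      rw [show b + 1 - a = (b - a) + 1 from by omega, List.isChain_range_succ]
      intro m hm
      exact hR (a + m) (by omega) (by omega)
    refine ⟨dd l, dd_ne_nil hlne, dd_chain' hchain, ?_, ?_, ?_⟩
    · rw [dd_head? l, hl]
      rw [show b + 1 - a = (b - a) + 1 from by omega, List.range_succ_eq_map]
      simp
    · rw [dd_getLast? l, hl]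
      rw [show b + 1 - a = (b - a) + 1 from by omega, List.range_succ]
      simp [show a + (b - a) = b from by omega]
    · intro x hx
      have := dd_subset l x hx
      rw [hl] at this
      simp only [List.mem_map, List.mem_range] at this
      obtain ⟨j, hj1, hj2⟩ := this
      exact ⟨a + j, by omega, by omega, hj2.symm⟩
  have hlen : 0 < l'.length := List.length_pos_iff.mpr hne
  have hki : ∀ i : Fin (l'.length - 1 + 1), i.1 < l'.length := fun i => by
    have := i.isLt
    omega
  refine ⟨l'.length - 1, fun i => l'[i.1]'(hki i), ?_, ?_, ?_, ?_⟩
  · intro i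
    exact hsub _ (List.getElem_mem _)
  · intro i
    have hilt : i.1 < l'.length - 1 := i.isLt
    have hc := List.isChain_iff_getElem.mp hch i.1 (by omega)
    simpa [List.get_eq_getElem] using hc
  · have h1 : l'.head hne = u a := by
      have := List.head?_eq_head hne
      rw [hhd] at this
      exact (Option.some_injective _ this.symm)
    rw [List.head_eq_getElem_zero hne] at h1
    simpa using h1
  · have h1 : l'.getLast hne = u b := by
      have := List.getLast?_eq_getLast_of_ne_nil hne
      rw [hlast] at this
      exact (Option.some_injective _ this.symm)
    rw [List.getLast_eq_getElem] at h1
    simpa [Fin.val_last] using h1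

end Lists


def clOf (h w : ℕ) (f : Fin h × Fin w → Bool) (c : ℤ × ℤ) : Bool :=
  if hc : 0 ≤ c.1 ∧ c.1 < (h : ℤ) ∧ 0 ≤ c.2 ∧ c.2 < (w : ℤ) then
    f (⟨c.1.toNat, by omega⟩, ⟨c.2.toNat, by omega⟩)
  else decide (0 ≤ c.1 ∧ c.1 < (h : ℤ))

theorem clOf_row {h w : ℕ} {f : Fin h × Fin w → Bool} {c : ℤ × ℤ}
    (hc : clOf h w f c = true) : 0 ≤ c.1 ∧ c.1 < (h : ℤ) := by
  unfold clOf at hc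
  split_ifs at hc with hg
  · exact ⟨hg.1, hg.2.1⟩
  · simpa using of_decide_eq_true hc

theorem clOf_wall {h w : ℕ} {f : Fin h × Fin w → Bool} {c : ℤ × ℤ}
    (h0 : 0 ≤ c.1) (h1 : c.1 < (h : ℤ)) (h2 : c.2 < 0 ∨ (w : ℤ) ≤ c.2) :
    clOf h w f c = true := by
  unfold clOf
  split_ifs with hg
  · omega
  · exact decide_eq_true ⟨h0, h1⟩

theorem clOf_opencol {h w : ℕ} {f : Fin h × Fin w → Bool} {c : ℤ × ℤ}
    (hc : clOf h w f c = false) (h0 : 0 ≤ c.1) (h1 : c.1 < (h : ℤ)) :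
    0 ≤ c.2 ∧ c.2 < (w : ℤ) := by
  by_contra hcon
  rw [clOf_wall h0 h1 (by omega)] at hc
  exact Bool.true_eq_false.mp hc

theorem clOf_neg_row {h w : ℕ} {f : Fin h × Fin w → Bool} {c : ℤ × ℤ}
    (h0 : c.1 < 0) : clOf h w f c = false := by
  unfold clOf
  split_ifs with hg
  · omega
  · simp
    omega

theorem clOf_grid {h w : ℕ} {f : Fin h × Fin w → Bool} {c : ℤ × ℤ}
    (h0 : 0 ≤ c.1) (h1 : c.1 < (h : ℤ)) (h2 : 0 ≤ c.2) (h3 : c.2 < (w : ℤ)) :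
    clOf h w f c = f (⟨c.1.toNat, by omega⟩, ⟨c.2.toNat, by omega⟩) := by
  unfold clOf
  rw [dif_pos ⟨h0, h1, h2, h3⟩]

theorem adj4_strict {p q : ℤ × ℤ} (h1 : adj4 p q) (h2 : p ≠ q) :
    |p.1 - q.1| + |p.2 - q.2| = 1 := by
  have h3 : p.1 ≠ q.1 ∨ p.2 ≠ q.2 := by
    by_contra hcon
    push_neg at hcon
    exact h2 (Prod.ext hcon.1 hcon.2)
  unfold adj4 at h1
  rcases abs_cases (p.1 - q.1) with ⟨e1, f1⟩ | ⟨e1, f1⟩ <;>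
    rcases abs_cases (p.2 - q.2) with ⟨e2, f2⟩ | ⟨e2, f2⟩ <;>
    omega

end PercDual

/-- Planar duality: if an `h × w` grid of closed (`true`) / open (`false`) cells contains
no 8-adjacent closed path from the leftmost column to the rightmost column, then it
contains a 4-adjacent open path from the top row to the bottom row. -/
theorem stmt_6 (h w : ℕ) (hh : 1 ≤ h) (hw : 1 ≤ w) (f : Fin h × Fin w → Bool)
    (hno : ¬ ∃ (k : ℕ) (path : Fin (k + 1) → Fin h × Fin w),
        (∀ i, f (path i) = true) ∧
        (∀ i : Fin k, Adj8 (path i.castSucc) (path i.succ)) ∧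
        ((path 0).2 : ℕ) = 0 ∧ ((path (Fin.last k)).2 : ℕ) = w - 1) :
    ∃ (k : ℕ) (path : Fin (k + 1) → Fin h × Fin w),
        (∀ i, f (path i) = false) ∧
        (∀ i : Fin k, Adj4 (path i.castSucc) (path i.succ)) ∧
        ((path 0).1 : ℕ) = 0 ∧ ((path (Fin.last k)).1 : ℕ) = h - 1 := by
  classical
  open PercDual in
  have hh1 : (1 : ℤ) ≤ (h : ℤ) := by exact_mod_cast hh
  have hw1 : (1 : ℤ) ≤ (w : ℤ) := by exact_mod_cast hw
  set cl := clOf h w f with hcldef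
  have hcl0 : cl (0, -1) = true := clOf_wall (by norm_num) (by show (0:ℤ) < h; omega) (by norm_num)
  have hcl1 : cl (-1, -1) = false := clOf_neg_row (by norm_num)
  have hrow : ∀ c : ℤ × ℤ, cl c = true → 0 ≤ c.1 ∧ c.1 < (h : ℤ) := fun c hc => clOf_row hc
  have hwall : ∀ c : ℤ × ℤ, 0 ≤ c.1 → c.1 < (h : ℤ) → (c.2 < 0 ∨ (w : ℤ) ≤ c.2) →
      cl c = true := fun c a b d => clOf_wall a b d
  obtain ⟨n₀, hcase⟩ := exists_outcome cl hcl0 hcl1 hrow hwall hh1 hw1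
  rcases hcase with hA | hB
  · -- open top-bottom crossing exists
    have h0 : (oseq cl 0).1 < 0 := by rw [oseq_zero]; norm_num
    have hT : (h : ℤ) ≤ (oseq cl (2 * n₀)).1 := by rw [oseq_even]; exact hA
    have hstep : ∀ i : ℕ, |(oseq cl (i + 1)).1 - (oseq cl i).1| ≤ 1 := by
      intro i
      have h1 := oseq_adj cl i
      unfold adj4 at h1
      have h2 := abs_nonneg ((oseq cl i).2 - (oseq cl (i + 1)).2)
      rw [abs_sub_comm]
      linarith
    obtain ⟨a, b, hab, hva, hvb, hrange⟩ :=
      cross (h : ℤ) hh1 (fun i => (oseq cl i).1) (2 * n₀) h0 hT hstep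
    have hva' : (oseq cl a).1 = 0 := hva
    have hvb' : (oseq cl b).1 = (h : ℤ) - 1 := hvb
    have hrange' : ∀ j, a ≤ j → j ≤ b → 0 ≤ (oseq cl j).1 ∧ (oseq cl j).1 < (h : ℤ) :=
      fun j h1 h2 => hrange j h1 h2
    obtain ⟨k, q, hqmem, hqadj, hq0, hqlast⟩ :=
      chain_path adj4 (oseq cl) a b hab (fun i _ _ => oseq_adj cl i)
    have hfacts : ∀ i : Fin (k + 1), 0 ≤ (q i).1 ∧ (q i).1 < (h : ℤ) ∧
        0 ≤ (q i).2 ∧ (q i).2 < (w : ℤ) ∧ cl (q i) = false := by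
      intro i
      obtain ⟨j, hj1, hj2, hj3⟩ := hqmem i
      have hop : cl (q i) = false := by rw [hj3]; exact oseq_open cl hcl0 hcl1 j
      have hr : 0 ≤ (q i).1 ∧ (q i).1 < (h : ℤ) := by rw [hj3]; exact hrange' j hj1 hj2
      have hcol := clOf_opencol hop hr.1 hr.2
      exact ⟨hr.1, hr.2, hcol.1, hcol.2, hop⟩
    refine ⟨k, fun i => (⟨(q i).1.toNat, by have := hfacts i; omega⟩,
      ⟨(q i).2.toNat, by have := hfacts i; omega⟩), ?_, ?_, ?_, ?_⟩
    · intro i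
      have hf := hfacts i
      have hg := clOf_grid hf.1 hf.2.1 hf.2.2.1 hf.2.2.2.1 (f := f)
      rw [← hcldef] at hg
      rw [← hg] at *
      exact hf.2.2.2.2
    · intro i
      obtain ⟨hadj, hne⟩ := hqadj i
      have hfc := hfacts i.castSucc
      have hfs := hfacts i.succ
      have hstrict := adj4_strict hadj hne
      show Adj4 _ _
      unfold Adj4
      simp only
      rw [Int.toNat_of_nonneg hfc.1, Int.toNat_of_nonneg hfs.1,
        Int.toNat_of_nonneg hfc.2.2.1, Int.toNat_of_nonneg hfs.2.2.1]
      exact hstrict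
    · simp only
      rw [hq0]
      omega
    · simp only
      rw [hqlast]
      omega
  · -- closed left-right crossing exists: contradiction
    exfalso
    apply hno
    have h0 : (cseq cl 0).2 < 0 := by rw [cseq_zero]; norm_num
    have hT : (w : ℤ) ≤ (cseq cl n₀).2 := hB
    have hstep : ∀ i : ℕ, |(cseq cl (i + 1)).2 - (cseq cl i).2| ≤ 1 := by
      intro i
      have h1 := (cseq_adj cl i).2
      rw [abs_sub_comm]
      exact h1
    obtain ⟨a, b, hab, hva, hvb, hrange⟩ :=
      cross (w : ℤ) hw1 (fun i => (cseq cl i).2) n₀ h0 hT hstep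
    have hva' : (cseq cl a).2 = 0 := hva
    have hvb' : (cseq cl b).2 = (w : ℤ) - 1 := hvb
    have hrange' : ∀ j, a ≤ j → j ≤ b → 0 ≤ (cseq cl j).2 ∧ (cseq cl j).2 < (w : ℤ) :=
      fun j h1 h2 => hrange j h1 h2
    obtain ⟨k, q, hqmem, hqadj, hq0, hqlast⟩ :=
      chain_path adj8 (cseq cl) a b hab (fun i _ _ => cseq_adj cl i)
    have hfacts : ∀ i : Fin (k + 1), 0 ≤ (q i).1 ∧ (q i).1 < (h : ℤ) ∧
        0 ≤ (q i).2 ∧ (q i).2 < (w : ℤ) ∧ cl (q i) = true := by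
      intro i
      obtain ⟨j, hj1, hj2, hj3⟩ := hqmem i
      have hclo : cl (q i) = true := by rw [hj3]; exact cseq_closed cl hcl0 hcl1 j
      have hr := hrow _ hclo
      have hc : 0 ≤ (q i).2 ∧ (q i).2 < (w : ℤ) := by rw [hj3]; exact hrange' j hj1 hj2
      exact ⟨hr.1, hr.2, hc.1, hc.2, hclo⟩
    refine ⟨k, fun i => (⟨(q i).1.toNat, by have := hfacts i; omega⟩,
      ⟨(q i).2.toNat, by have := hfacts i; omega⟩), ?_, ?_, ?_, ?_⟩
    · intro i
      have hf := hfacts i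
      have hg := clOf_grid hf.1 hf.2.1 hf.2.2.1 hf.2.2.2.1 (f := f)
      rw [← hcldef] at hg
      rw [← hg] at *
      exact hf.2.2.2.2
    · intro i
      obtain ⟨hadj, hne⟩ := hqadj i
      have hfc := hfacts i.castSucc
      have hfs := hfacts i.succ
      show Adj8 _ _
      unfold Adj8
      refine ⟨?_, ?_, ?_⟩
      · intro heq
        apply hne
        rw [Prod.ext_iff] at heq ⊢
        obtain ⟨e1, e2⟩ := heq
        rw [Fin.mk.injEq] at e1 e2
        constructor
        · omega
        · omega
      · simp only
        rw [Int.toNat_of_nonneg hfc.1, Int.toNat_of_nonneg hfs.1]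
        exact hadj.1
      · simp only
        rw [Int.toNat_of_nonneg hfc.2.2.1, Int.toNat_of_nonneg hfs.2.2.1]
        exact hadj.2
    · simp only
      rw [hq0]
      omega
    · simp only
      rw [hqlast]
      omega
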